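/- Let U ∈ ℂ^{n×n} be unitary and symmetric (UUᴴ = Iₙ, U = Uᵀ), and let B ∈ ℂ^{n×n} satisfy UᴴB + BᴴU = 0 and B = Bᵀ. Then the matrix V := U · exp(UᴴB) (matrix exponential) is again unitary and symmetric, i.e., VVᴴ = Iₙ and V = Vᵀ. In particular, the geodesic U(μ) = U·exp(μ·UᴴB) remains in the set of unitary symmetric matrices for all real μ. -/

import Mathlib

open Matrix

lemma aux_usym {n : ℕ} (U A : Matrix (Fin n) (Fin n) ℂ)
    (hU : U * Uᴴ = 1) (hUt : Uᵀ = U) (hA : Aᴴ = -A) (hAt : Aᵀ = U * A * Uᴴ) :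
    (U * NormedSpace.exp A) * (U * NormedSpace.exp A)ᴴ = 1 ∧
      U * NormedSpace.exp A = (U * NormedSpace.exp A)ᵀ := by
  have hU' : Uᴴ * U = 1 := mul_eq_one_comm.mp hU
  have hexp : NormedSpace.exp A * (NormedSpace.exp A)ᴴ = 1 := by
    rw [← Matrix.exp_conjTranspose, hA,
      ← Matrix.exp_add_of_commute A (-A) (Commute.neg_right rfl),
      add_neg_cancel, NormedSpace.exp_zero]
  constructor
  · rw [Matrix.conjTranspose_mul, mul_assoc, ← mul_assoc (NormedSpace.exp A), hexp, one_mul, hU]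
  · have hUu : IsUnit U := ⟨⟨U, Uᴴ, hU, hU'⟩, rfl⟩
    have hUinv : U⁻¹ = Uᴴ := inv_eq_right_inv hU
    rw [Matrix.transpose_mul, ← Matrix.exp_transpose, hAt, ← hUinv,
      Matrix.exp_conj U A hUu, hUinv, hUt, mul_assoc, mul_assoc, hU', mul_one]

theorem geodesic_stays_in_manifold {n : ℕ} (U B : Matrix (Fin n) (Fin n) ℂ)
    (hU : U * Uᴴ = 1) (hUs : U = Uᵀ)
    (hB1 : Uᴴ * B + Bᴴ * U = 0) (hB2 : B = Bᵀ) :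
    ((U * NormedSpace.exp (Uᴴ * B)) * (U * NormedSpace.exp (Uᴴ * B))ᴴ = 1 ∧
      U * NormedSpace.exp (Uᴴ * B) = (U * NormedSpace.exp (Uᴴ * B))ᵀ) ∧
    ∀ μ : ℝ,
      (U * NormedSpace.exp (μ • (Uᴴ * B))) * (U * NormedSpace.exp (μ • (Uᴴ * B)))ᴴ = 1 ∧
      U * NormedSpace.exp (μ • (Uᴴ * B)) = (U * NormedSpace.exp (μ • (Uᴴ * B)))ᵀ := by
  have hA : (Uᴴ * B)ᴴ = -(Uᴴ * B) := by
    rw [Matrix.conjTranspose_mul, Matrix.conjTranspose_conjTranspose,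
      eq_neg_of_add_eq_zero_right hB1]
  have hUHsym : (Uᴴ)ᵀ = Uᴴ := by
    ext i j
    simp only [Matrix.transpose_apply, Matrix.conjTranspose_apply]
    congr 1
    conv_lhs => rw [hUs]
    rfl
  have hAt : (Uᴴ * B)ᵀ = U * (Uᴴ * B) * Uᴴ := by
    rw [Matrix.transpose_mul, hUHsym, ← hB2, ← mul_assoc, hU, one_mul]
  refine ⟨aux_usym U _ hU hUs.symm hA hAt, fun μ => aux_usym U _ hU hUs.symm ?_ ?_⟩
  · rw [Matrix.conjTranspose_smul, hA, star_trivial, smul_neg]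
  · rw [Matrix.transpose_smul, hAt, Matrix.mul_smul, Matrix.smul_mul]
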